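/- Let X^ε be an asymptotically regular family of continuous-time Markov chains on finite S (N ≥ 2) whose skeleton chain Z (with transition probabilities P_{ij} = lim_{ε↓0} q_{ij}(ε)/∑_{j'≠i} q_{ij'}(ε), P_{ii} = 0) is irreducible with stationary distribution λ. Let T(i,ε) = (∑_{j≠i} q_{ij}(ε))^{-1} and T̄(ε) = ∑_{i'} λ(i') T(i',ε). Then the stationary distribution μ(i,ε) of X^ε satisfies μ(i,ε) / (λ(i) T(i,ε)/T̄(ε)) → 1 as ε ↓ 0, for every i ∈ S. -/

import Mathlib

open Filter Topology Finset

section aux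
variable {N : ℕ} {P : Matrix (Fin N) (Fin N) ℝ}

lemma powEntryNonneg (hP : ∀ i j, 0 ≤ P i j) : ∀ n (i j : Fin N), 0 ≤ (P ^ n) i j := by
  intro n
  induction n with
  | zero => intro i j; simp [Matrix.one_apply]; split <;> norm_num
  | succ n ih =>
    intro i j
    rw [pow_succ, Matrix.mul_apply]
    exact Finset.sum_nonneg fun k _ => mul_nonneg (ih i k) (hP k j)

lemma statPow {v : Fin N → ℝ} (hv : ∀ j, ∑ i, v i * P i j = v j) :
    ∀ n (j : Fin N), ∑ i, v i * (P ^ n) i j = v j := by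
  intro n
  induction n with
  | zero => intro j; simp [Matrix.one_apply, mul_ite]
  | succ n ih =>
    intro j
    simp_rw [pow_succ, Matrix.mul_apply, Finset.mul_sum, ← mul_assoc]
    rw [Finset.sum_comm]
    simp_rw [← Finset.sum_mul, ih]
    exact hv j

lemma lamPos (hPnn : ∀ i j, 0 ≤ P i j) (hirr : ∀ i j : Fin N, ∃ n : ℕ, 0 < (P ^ n) i j)
    {lam : Fin N → ℝ} (hlamnn : ∀ i, 0 ≤ lam i) (hlam1 : ∑ i, lam i = 1)
    (hlamstat : ∀ j, ∑ i, lam i * P i j = lam j) : ∀ i, 0 < lam i := by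
  obtain ⟨j0, hj0⟩ : ∃ j0, 0 < lam j0 := by
    by_contra h
    push_neg at h
    have : ∑ i, lam i = 0 :=
      le_antisymm (Finset.sum_nonpos fun i _ => h i) (Finset.sum_nonneg fun i _ => hlamnn i)
    rw [hlam1] at this; norm_num at this
  intro i
  obtain ⟨n, hn⟩ := hirr j0 i
  have := statPow hlamstat n i
  have hle : lam j0 * (P ^ n) j0 i ≤ ∑ k, lam k * (P ^ n) k i :=
    Finset.single_le_sum (fun k _ => mul_nonneg (hlamnn k) (powEntryNonneg hPnn n k i))
      (Finset.mem_univ j0)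
  calc (0:ℝ) < lam j0 * (P ^ n) j0 i := mul_pos hj0 hn
  _ ≤ ∑ k, lam k * (P ^ n) k i := hle
  _ = lam i := this

lemma statUnique (hPnn : ∀ i j, 0 ≤ P i j) (hirr : ∀ i j : Fin N, ∃ n : ℕ, 0 < (P ^ n) i j)
    {lam : Fin N → ℝ} (hlamnn : ∀ i, 0 ≤ lam i) (hlam1 : ∑ i, lam i = 1)
    (hlamstat : ∀ j, ∑ i, lam i * P i j = lam j)
    {v : Fin N → ℝ} (hv1 : ∑ i, v i = 1)
    (hvstat : ∀ j, ∑ i, v i * P i j = v j) : v = lam := by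
  have hlp := lamPos hPnn hirr hlamnn hlam1 hlamstat
  have hne : (Finset.univ : Finset (Fin N)).Nonempty := by
    by_contra h
    rw [Finset.not_nonempty_iff_eq_empty] at h
    rw [h] at hlam1; simp at hlam1
  obtain ⟨i0, -, hi0⟩ := Finset.exists_min_image Finset.univ (fun i => v i / lam i) hne
  obtain ⟨c, hc⟩ : ∃ c : ℝ, c = v i0 / lam i0 := ⟨_, rfl⟩
  have hcl : c * lam i0 = v i0 := by
    rw [hc, div_mul_cancel₀ _ (hlp i0).ne']
  have hhnn : ∀ i, 0 ≤ v i - c * lam i := by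
    intro i
    have h1 : c ≤ v i / lam i := hc ▸ hi0 i (Finset.mem_univ i)
    have := (le_div_iff₀ (hlp i)).mp h1
    linarith
  have hhstat : ∀ j, ∑ i, (v i - c * lam i) * P i j = v j - c * lam j := by
    intro j
    simp only [sub_mul, Finset.sum_sub_distrib, hvstat j, mul_assoc, ← Finset.mul_sum,
      hlamstat j]
  have hzero : ∀ i, v i - c * lam i = 0 := by
    intro i
    obtain ⟨n, hn⟩ := hirr i i0
    have hsum := statPow hhstat n i0
    have hi0z : v i0 - c * lam i0 = 0 := by linarith
    rw [hi0z] at hsum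
    have hterm : ∀ k ∈ Finset.univ, (0:ℝ) ≤ (v k - c * lam k) * (P ^ n) k i0 :=
      fun k _ => mul_nonneg (hhnn k) (powEntryNonneg hPnn n k i0)
    have := (Finset.sum_eq_zero_iff_of_nonneg hterm).mp hsum i (Finset.mem_univ i)
    rcases mul_eq_zero.mp this with h' | h'
    · exact h'
    · exact absurd h' (ne_of_gt hn)
  have hcsum : ∑ i, (v i - c * lam i) = 0 := Finset.sum_eq_zero fun i _ => hzero i
  have hc1 : c = 1 := by
    have : ∑ i, (v i - c * lam i) = ∑ i, v i - c * ∑ i, lam i := by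
      simp [Finset.sum_sub_distrib, Finset.mul_sum]
    rw [hcsum, hv1, hlam1] at this
    linarith
  funext i
  have := hzero i
  rw [hc1] at this
  linarith

end aux

lemma tendstoOfMapClusterPt {α β : Type*} [TopologicalSpace β] {l : Filter α} [l.NeBot]
    {f : α → β} {K : Set β} (hK : IsCompact K) (hf : ∀ᶠ a in l, f a ∈ K)
    {b : β} (h : ∀ x, MapClusterPt x l f → x = b) : Tendsto f l (𝓝 b) := by
  by_contra h'
  rw [Filter.tendsto_iff_forall_eventually_mem] at h'
  push_neg at h'
  obtain ⟨U, hU, hUf⟩ := h'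
  have hne : (l ⊓ 𝓟 {a | f a ∉ U}).NeBot := Filter.frequently_iff_neBot.mp hUf
  set l' := l ⊓ 𝓟 {a | f a ∉ U} with hl'
  have hKmem : ∀ᶠ a in l', f a ∈ K := Filter.Eventually.filter_mono inf_le_left hf
  have hle : map f l' ≤ 𝓟 K := by
    rwa [Filter.le_principal_iff, Filter.mem_map']
  obtain ⟨x, hxK, hx⟩ := hK.exists_clusterPt hle
  have hxb : x = b := h x (hx.mono (map_mono inf_le_left))
  have hxcl : x ∈ closure Uᶜ := by
    rw [mem_closure_iff_clusterPt]
    refine hx.mono ?_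
    rw [Filter.le_principal_iff, Filter.mem_map']
    exact Filter.Eventually.filter_mono inf_le_right
      (Filter.eventually_principal.mpr fun a ha => ha)
  have : b ∈ interior U := mem_interior_iff_mem_nhds.mpr hU
  rw [← hxb] at this
  have hdisj : interior U ∩ closure Uᶜ = ∅ := by
    rw [closure_compl]
    simp
  exact Set.eq_empty_iff_forall_notMem.mp hdisj x ⟨this, hxcl⟩

/-- For an asymptotically regular family of continuous-time Markov chains whose skeleton
chain `P` is irreducible with stationary distribution `λ`, the stationary distribution
`μ(·,ε)` of `X^ε` satisfies `μ(i,ε) ~ λ(i) T(i,ε)/T̄(ε)` as `ε ↓ 0`, where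
`T(i,ε) = (∑_{j≠i} q_{ij}(ε))⁻¹` and `T̄(ε) = ∑_{i'} λ(i') T(i',ε)`. -/
theorem stmt7 (N : ℕ) (hN : 2 ≤ N) (q : ℝ → Fin N → Fin N → ℝ)
    (hpos : ∀ ε > (0:ℝ), ∀ i j, i ≠ j → 0 < q ε i j)
    (hAR : ∀ i j k l : Fin N, i ≠ j → k ≠ l → ∃ L : ENNReal,
      Tendsto (fun ε => ENNReal.ofReal (q ε i j / q ε k l)) (𝓝[>] (0:ℝ)) (𝓝 L))
    (P : Matrix (Fin N) (Fin N) ℝ) (hPdiag : ∀ i, P i i = 0)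
    (hP : ∀ i j : Fin N, i ≠ j → Tendsto
      (fun ε => q ε i j / ∑ j' ∈ Finset.univ.erase i, q ε i j')
      (𝓝[>] (0:ℝ)) (𝓝 (P i j)))
    (hirr : ∀ i j : Fin N, ∃ n : ℕ, 0 < (P ^ n) i j)
    (lam : Fin N → ℝ)
    (hlamnn : ∀ i, 0 ≤ lam i) (hlam1 : ∑ i, lam i = 1)
    (hlamstat : ∀ j, ∑ i, lam i * P i j = lam j)
    (μ : ℝ → Fin N → ℝ)
    (hμ : ∀ ε > (0:ℝ), (∀ i, 0 ≤ μ ε i) ∧ (∑ i, μ ε i = 1) ∧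
      ∀ j, ∑ i ∈ Finset.univ.erase j, μ ε i * q ε i j
        = μ ε j * ∑ k ∈ Finset.univ.erase j, q ε j k) :
    ∀ i, Tendsto (fun ε =>
        μ ε i / (lam i * (∑ j ∈ Finset.univ.erase i, q ε i j)⁻¹
          / ∑ i', lam i' * (∑ j ∈ Finset.univ.erase i', q ε i' j)⁻¹))
      (𝓝[>] (0:ℝ)) (𝓝 1) := by
  have hnt : Nontrivial (Fin N) := by
    rw [Fin.nontrivial_iff_two_le]; exact hN
  set l : Filter ℝ := 𝓝[>] (0:ℝ) with hldef
  have hlpos : ∀ᶠ ε in l, (0:ℝ) < ε := eventually_mem_nhdsWithin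
  -- Q and its positivity
  set Q : ℝ → Fin N → ℝ := fun ε i => ∑ j ∈ Finset.univ.erase i, q ε i j with hQdef
  have hQpos : ∀ ε > (0:ℝ), ∀ i, 0 < Q ε i := by
    intro ε hε i
    obtain ⟨j, hj⟩ := exists_ne i
    refine Finset.sum_pos' (fun k hk => (hpos ε hε i k (Finset.ne_of_mem_erase hk).symm).le)
      ⟨j, Finset.mem_erase.mpr ⟨hj, Finset.mem_univ j⟩, hpos ε hε i j (Ne.symm hj)⟩
  set D : ℝ → ℝ := fun ε => ∑ j, μ ε j * Q ε j with hDdef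
  have hDpos : ∀ ε > (0:ℝ), 0 < D ε := by
    intro ε hε
    obtain ⟨j, hj⟩ : ∃ j, 0 < μ ε j := by
      by_contra h
      push_neg at h
      have h0 : ∑ j, μ ε j = 0 :=
        le_antisymm (Finset.sum_nonpos fun j _ => h j)
          (Finset.sum_nonneg fun j _ => (hμ ε hε).1 j)
      rw [(hμ ε hε).2.1] at h0; norm_num at h0
    exact Finset.sum_pos' (fun k _ => mul_nonneg ((hμ ε hε).1 k) (hQpos ε hε k).le)
      ⟨j, Finset.mem_univ j, mul_pos hj (hQpos ε hε j)⟩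
  set ν : ℝ → Fin N → ℝ := fun ε i => μ ε i * Q ε i / D ε with hνdef
  have hνnn : ∀ ε > (0:ℝ), ∀ i, 0 ≤ ν ε i := fun ε hε i =>
    div_nonneg (mul_nonneg ((hμ ε hε).1 i) (hQpos ε hε i).le) (hDpos ε hε).le
  have hνsum : ∀ ε > (0:ℝ), ∑ i, ν ε i = 1 := by
    intro ε hε
    simp only [hνdef, ← Finset.sum_div]
    exact div_self (hDpos ε hε).ne'
  have hνstat : ∀ ε > (0:ℝ), ∀ j,
      ∑ i ∈ Finset.univ.erase j, ν ε i * (q ε i j / Q ε i) = ν ε j := by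
    intro ε hε j
    have hstep : ∀ i ∈ Finset.univ.erase j, ν ε i * (q ε i j / Q ε i)
        = μ ε i * q ε i j / D ε := by
      intro i _
      have hQ1 : Q ε i ≠ 0 := (hQpos ε hε i).ne'
      have hD1 : D ε ≠ 0 := (hDpos ε hε).ne'
      simp only [hνdef]
      field_simp
    rw [Finset.sum_congr rfl hstep, ← Finset.sum_div, (hμ ε hε).2.2 j]
  -- P entries nonneg
  have hPnn : ∀ i j, 0 ≤ P i j := by
    intro i j
    rcases eq_or_ne i j with rfl | hij
    · rw [hPdiag]
    · refine ge_of_tendsto (hP i j hij) (hlpos.mono fun ε hε => ?_)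
      exact div_nonneg (hpos ε hε i j hij).le (hQpos ε hε i).le
  have hlp : ∀ i, 0 < lam i := lamPos hPnn hirr hlamnn hlam1 hlamstat
  -- convergence of ν to lam
  have hνtend : Tendsto ν l (𝓝 lam) := by
    refine tendstoOfMapClusterPt (isCompact_Icc (a := (0 : Fin N → ℝ)) (b := 1))
      (hlpos.mono fun ε hε => ?_) ?_
    · constructor
      · intro i; exact hνnn ε hε i
      · intro i
        have h1 : ν ε i ≤ ∑ k, ν ε k :=
          Finset.single_le_sum (fun k _ => hνnn ε hε k) (Finset.mem_univ i)
        rw [hνsum ε hε] at h1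
        exact h1
    · intro x hx
      have hG : (l ⊓ comap ν (𝓝 x)).NeBot := by
        rw [MapClusterPt, ClusterPt, ← Filter.push_pull', Filter.map_neBot_iff] at hx
        rwa [inf_comm] at hx
      set G := l ⊓ comap ν (𝓝 x) with hGdef
      have hGl : G ≤ l := inf_le_left
      have hGx : Tendsto ν G (𝓝 x) := tendsto_comap.mono_left inf_le_right
      have hGpos : ∀ᶠ ε in G, (0:ℝ) < ε := Filter.Eventually.filter_mono hGl hlpos
      have hxi : ∀ i, Tendsto (fun ε => ν ε i) G (𝓝 (x i)) := fun i =>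
        ((continuous_apply i).tendsto x).comp hGx
      have hxsum : (1:ℝ) = ∑ i, x i := by
        refine tendsto_nhds_unique ?_ (tendsto_finset_sum _ fun i _ => hxi i)
        exact Tendsto.congr' (hGpos.mono fun ε hε => (hνsum ε hε).symm) tendsto_const_nhds
      have hxstat : ∀ j, ∑ i, x i * P i j = x j := by
        intro j
        have h1 : Tendsto (fun ε => ∑ i ∈ Finset.univ.erase j, ν ε i * (q ε i j / Q ε i)) G
            (𝓝 (∑ i ∈ Finset.univ.erase j, x i * P i j)) := by
          refine tendsto_finset_sum _ fun i hi => (hxi i).mul ?_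
          exact (hP i j (Finset.ne_of_mem_erase hi)).mono_left hGl
        have h2 : Tendsto (fun ε => ∑ i ∈ Finset.univ.erase j, ν ε i * (q ε i j / Q ε i)) G
            (𝓝 (x j)) :=
          Tendsto.congr' (hGpos.mono fun ε hε => (hνstat ε hε j).symm) (hxi j)
        have heq := tendsto_nhds_unique h1 h2
        rw [← Finset.add_sum_erase _ _ (Finset.mem_univ j), hPdiag j, heq]
        ring
      exact statUnique hPnn hirr hlamnn hlam1 hlamstat hxsum.symm hxstat
  have hνi : ∀ i, Tendsto (fun ε => ν ε i) l (𝓝 (lam i)) := fun i =>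
    ((continuous_apply i).tendsto lam).comp hνtend
  -- final computation
  intro i
  set S : ℝ → ℝ := fun ε => ∑ i', lam i' * (Q ε i')⁻¹ with hSdef
  set Sν : ℝ → ℝ := fun ε => ∑ i', ν ε i' * (Q ε i')⁻¹ with hSνdef
  have hDSν : ∀ ε > (0:ℝ), D ε * Sν ε = 1 := by
    intro ε hε
    have : ∀ k ∈ Finset.univ, D ε * (ν ε k * (Q ε k)⁻¹) = μ ε k := by
      intro k _
      have hQ1 : Q ε k ≠ 0 := (hQpos ε hε k).ne'
      have hD1 : D ε ≠ 0 := (hDpos ε hε).ne'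
      simp only [hνdef]
      field_simp
    rw [hSνdef, Finset.mul_sum, Finset.sum_congr rfl this]
    exact (hμ ε hε).2.1
  have hSνpos : ∀ ε > (0:ℝ), 0 < Sν ε := by
    intro ε hε
    nlinarith [hDSν ε hε, hDpos ε hε, mul_pos (hDpos ε hε) (hDpos ε hε)]
  have hSpos : ∀ ε > (0:ℝ), 0 < S ε := by
    intro ε hε
    refine Finset.sum_pos (fun k _ => mul_pos (hlp k) (inv_pos.mpr (hQpos ε hε k)))
      Finset.univ_nonempty
  -- eventual equality
  have heq : ∀ᶠ ε in l, (ν ε i / lam i) * (S ε / Sν ε)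
      = μ ε i / (lam i * (Q ε i)⁻¹ / S ε) := by
    filter_upwards [hlpos] with ε hε
    have hμi : μ ε i = ν ε i * (Q ε i)⁻¹ / Sν ε := by
      have h1 : ν ε i * (Q ε i)⁻¹ / Sν ε = μ ε i / (D ε * Sν ε) := by
        have hQ1 : Q ε i ≠ 0 := (hQpos ε hε i).ne'
        have hD1 : D ε ≠ 0 := (hDpos ε hε).ne'
        have hSν1 : Sν ε ≠ 0 := (hSνpos ε hε).ne'
        simp only [hνdef]
        field_simp
      rw [h1, hDSν ε hε, div_one]
    rw [hμi]
    have h2 : lam i ≠ 0 := (hlp i).ne'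
    have h3 : (Q ε i) ≠ 0 := (hQpos ε hε i).ne'
    have h4 : S ε ≠ 0 := (hSpos ε hε).ne'
    have h5 : Sν ε ≠ 0 := (hSνpos ε hε).ne'
    field_simp
  -- limits
  have h1 : Tendsto (fun ε => ν ε i / lam i) l (𝓝 1) := by
    have := (hνi i).div tendsto_const_nhds (hlp i).ne'
    rwa [div_self (hlp i).ne'] at this
  have h2 : Tendsto (fun ε => S ε / Sν ε) l (𝓝 1) := by
    rw [Metric.tendsto_nhds]
    intro δ0 hδ0
    obtain ⟨θ, hθpos, hθhalf, hθδ⟩ : ∃ θ : ℝ, 0 < θ ∧ θ ≤ 1/2 ∧ θ ≤ δ0/4 :=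
      ⟨min (1/2) (δ0/4), lt_min (by norm_num) (by linarith), min_le_left _ _,
        min_le_right _ _⟩
    have hev : ∀ᶠ ε in l, ∀ i', |ν ε i' - lam i'| ≤ θ * lam i' := by
      rw [Filter.eventually_all]
      intro i'
      have := Metric.tendsto_nhds.mp (hνi i') (θ * lam i') (mul_pos hθpos (hlp i'))
      refine this.mono fun ε hε => ?_
      rw [Real.dist_eq] at hε
      exact hε.le
    filter_upwards [hev, hlpos] with ε hε hεpos
    have hQinn : ∀ k, (0:ℝ) ≤ (Q ε k)⁻¹ := fun k => (inv_pos.mpr (hQpos ε hεpos k)).le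
    have hlb : (1 - θ) * S ε ≤ Sν ε := by
      rw [hSdef, Finset.mul_sum]
      refine Finset.sum_le_sum fun k _ => ?_
      have := abs_le.mp (hε k)
      have h' : (1 - θ) * lam k ≤ ν ε k := by linarith
      calc (1 - θ) * (lam k * (Q ε k)⁻¹) = ((1 - θ) * lam k) * (Q ε k)⁻¹ := by ring
      _ ≤ ν ε k * (Q ε k)⁻¹ := mul_le_mul_of_nonneg_right h' (hQinn k)
    have hub : Sν ε ≤ (1 + θ) * S ε := by
      rw [hSdef, Finset.mul_sum]
      refine Finset.sum_le_sum fun k _ => ?_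
      have := abs_le.mp (hε k)
      have h' : ν ε k ≤ (1 + θ) * lam k := by linarith
      calc ν ε k * (Q ε k)⁻¹ ≤ ((1 + θ) * lam k) * (Q ε k)⁻¹ :=
        mul_le_mul_of_nonneg_right h' (hQinn k)
      _ = (1 + θ) * (lam k * (Q ε k)⁻¹) := by ring
    have hS := hSpos ε hεpos
    have hSν : 0 < Sν ε := lt_of_lt_of_le (by nlinarith) hlb
    rw [Real.dist_eq]
    have habs : |S ε / Sν ε - 1| = |S ε - Sν ε| / Sν ε := by
      rw [div_sub_one hSν.ne', abs_div, abs_of_pos hSν]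
    rw [habs]
    have hnum : |S ε - Sν ε| ≤ θ * S ε := by
      rw [abs_le]
      constructor <;> nlinarith
    have hfrac : |S ε - Sν ε| / Sν ε ≤ (θ * S ε) / ((1 - θ) * S ε) := by
      exact div_le_div₀ (mul_nonneg hθpos.le hS.le) hnum (by nlinarith) hlb
    have heq2 : (θ * S ε) / ((1 - θ) * S ε) = θ / (1 - θ) := by
      rw [mul_div_mul_right _ _ hS.ne']
    have hfin : θ / (1 - θ) ≤ 2 * θ := by
      rw [div_le_iff₀ (by linarith)]
      nlinarith
    calc |S ε - Sν ε| / Sν ε ≤ θ / (1 - θ) := by rw [← heq2]; exact hfrac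
    _ ≤ 2 * θ := hfin
    _ ≤ δ0 / 2 := by linarith
    _ < δ0 := by linarith
  have := (h1.mul h2).congr' heq
  rwa [mul_one] at this
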